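/- For x > 1, (2/π) ∫_{-1}^{1} √(1 - t²)/(x - t) dt = 2x(1 - √(1 - 1/x²)). -/

import Mathlib

open Real intervalIntegral

theorem key (x : ℝ) (hx : 1 < x) :
    ∫ t in (-1 : ℝ)..1, Real.sqrt (1 - t ^ 2) / (x - t) =
      π * x - π * Real.sqrt (x ^ 2 - 1) := by
  have hx0 : (0:ℝ) < x := by linarith
  set s := Real.sqrt (x ^ 2 - 1) with hs
  have hs2 : s ^ 2 = x ^ 2 - 1 := Real.sq_sqrt (by nlinarith)
  have hspos : 0 < s := Real.sqrt_pos.mpr (by nlinarith)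
  set F : ℝ → ℝ := fun t => x * Real.arcsin t + s * Real.arcsin ((1 - x * t) / (x - t))
      - Real.sqrt (1 - t ^ 2) with hF
  have hcont : ContinuousOn F (Set.Icc (-1:ℝ) 1) := by
    apply ContinuousOn.sub
    · apply ContinuousOn.add
      · exact continuousOn_const.mul Real.continuous_arcsin.continuousOn
      · apply continuousOn_const.mul
        apply Real.continuous_arcsin.comp_continuousOn
        apply ContinuousOn.div
        · fun_prop
        · fun_prop
        · intro t ht
          have := ht.2
          intro h
          have : x = t := by linarith [sub_eq_zero.mp h]
          linarith [this ▸ hx]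
    · apply Continuous.continuousOn; fun_prop
  have hderiv : ∀ t ∈ Set.Ioo (-1:ℝ) 1,
      HasDerivAt F (Real.sqrt (1 - t ^ 2) / (x - t)) t := by
    intro t ht
    obtain ⟨ht1, ht2⟩ := ht
    have ha0 : (0:ℝ) < 1 - t ^ 2 := by nlinarith
    have hxt : (0:ℝ) < x - t := by linarith
    set a := Real.sqrt (1 - t ^ 2) with hadef
    have ha2 : a ^ 2 = 1 - t ^ 2 := Real.sq_sqrt ha0.le
    have hapos : 0 < a := Real.sqrt_pos.mpr ha0
    have hu : HasDerivAt (fun t : ℝ => (1 - x * t) / (x - t))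
        ((1 - x ^ 2) / (x - t) ^ 2) t := by
      have h1 : HasDerivAt (fun t : ℝ => 1 - x * t) (-x) t := by
        simpa using ((hasDerivAt_id t).const_mul x).const_sub 1
      have h2 : HasDerivAt (fun t : ℝ => x - t) (-1) t := by
        simpa using (hasDerivAt_id t).const_sub x
      have := h1.fun_div h2 hxt.ne'
      refine this.congr_deriv ?_
      field_simp
      ring
    set u := (1 - x * t) / (x - t) with hudef
    have hu2 : 1 - u ^ 2 = (x ^ 2 - 1) * (1 - t ^ 2) / (x - t) ^ 2 := by
      rw [hudef]; field_simp; ring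
    have hu2pos : 0 < 1 - u ^ 2 := by
      rw [hu2]; apply div_pos (mul_pos (by nlinarith) ha0) (by positivity)
    have hune1 : u ≠ -1 := by intro h; rw [h] at hu2pos; norm_num at hu2pos
    have hune2 : u ≠ 1 := by intro h; rw [h] at hu2pos; norm_num at hu2pos
    have hsqu : Real.sqrt (1 - u ^ 2) = s * a / (x - t) := by
      rw [hu2]
      have : (x ^ 2 - 1) * (1 - t ^ 2) / (x - t) ^ 2 = (s * a / (x - t)) ^ 2 := by
        rw [div_pow, mul_pow, hs2, ha2]
      rw [this, Real.sqrt_sq (by positivity)]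
    have d1 : HasDerivAt (fun t : ℝ => x * Real.arcsin t) (x * (1 / a)) t := by
      have := (Real.hasDerivAt_arcsin ht1.ne' ht2.ne).const_mul x
      simpa [hadef] using this
    have d2 : HasDerivAt (fun t : ℝ => s * Real.arcsin ((1 - x * t) / (x - t)))
        (s * ((1 / (s * a / (x - t))) * ((1 - x ^ 2) / (x - t) ^ 2))) t := by
      have hcomp := (Real.hasDerivAt_arcsin hune1 hune2).comp t hu
      rw [hsqu] at hcomp
      exact hcomp.const_mul s
    have d3 : HasDerivAt (fun t : ℝ => Real.sqrt (1 - t ^ 2))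
        (1 / (2 * a) * (-(2 * t))) t := by
      have hinner : HasDerivAt (fun t : ℝ => 1 - t ^ 2) (-(2 * t)) t := by
        simpa using (hasDerivAt_pow 2 t).const_sub 1
      have := (Real.hasDerivAt_sqrt ha0.ne').comp t hinner
      simpa [hadef, Function.comp_def] using this
    have := (d1.add d2).sub d3
    refine this.congr_deriv ?_
    have hsne : s ≠ 0 := hspos.ne'
    have hane : a ≠ 0 := hapos.ne'
    have hxtne : x - t ≠ 0 := hxt.ne'
    field_simp
    linear_combination (-1 : ℝ) * ha2
  have hint : IntervalIntegrable (fun t => Real.sqrt (1 - t ^ 2) / (x - t))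
      MeasureTheory.volume (-1 : ℝ) 1 := by
    apply ContinuousOn.intervalIntegrable
    apply ContinuousOn.div
    · fun_prop
    · fun_prop
    · intro t ht
      rw [Set.uIcc_of_le (by norm_num : (-1:ℝ) ≤ 1)] at ht
      have := ht.2
      intro h
      have : x = t := by linarith [sub_eq_zero.mp h]
      linarith [this ▸ hx]
  have hFTC := integral_eq_sub_of_hasDeriv_right_of_le (by norm_num : (-1:ℝ) ≤ 1)
    hcont (fun t ht => (hderiv t ht).hasDerivWithinAt) hint
  rw [hFTC]
  have e1 : (1 - x * 1) / (x - 1) = -1 := by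
    rw [div_eq_iff (by linarith : x - 1 ≠ 0)]; ring
  have e2 : (1 - x * (-1)) / (x - (-1)) = 1 := by
    rw [div_eq_iff (by linarith : x - (-1) ≠ 0)]; ring
  simp only [hF, e1, e2, Real.arcsin_one, Real.arcsin_neg_one, one_pow]
  rw [show (1:ℝ) - 1 = 0 by ring, show (1:ℝ) - (-1)^2 = 0 by ring, Real.sqrt_zero]
  ring

theorem stmt_2 (x : ℝ) (hx : 1 < x) :
    (2 / π) * ∫ t in (-1 : ℝ)..1, Real.sqrt (1 - t ^ 2) / (x - t) =
      2 * x * (1 - Real.sqrt (1 - 1 / x ^ 2)) := by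
  have hx0 : (0:ℝ) < x := by linarith
  rw [key x hx]
  have hsx : Real.sqrt (x ^ 2 - 1) = x * Real.sqrt (1 - 1 / x ^ 2) := by
    have h : x ^ 2 - 1 = x ^ 2 * (1 - 1 / x ^ 2) := by
      field_simp
    rw [h, Real.sqrt_mul (sq_nonneg x), Real.sqrt_sq hx0.le]
  rw [hsx]
  field_simp
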